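/- Let p be an odd prime, k ≥ (p-1)/2, and D = {α_1,...,α_n} ⊆ F_p with k < n ≤ p. Then u ∈ F_p^n is a deep hole of RS_p(D,k) if and only if the Lagrange interpolating function u(x) of u is equivalent to x^k or to 1/(x-δ) for some δ ∈ F_p \ D, where two functions f and g on D are equivalent if g = a·f + h on D for some a ∈ F_p^* and polynomial h of degree < k. -/

import Mathlib

/-- Error distance of a word `u` to a code `C`. -/
noncomputable def errDist {ι F : Type*} [Fintype ι] [DecidableEq F]
    (u : ι → F) (C : Set (ι → F)) : ℕ :=
  sInf ((fun c => hammingDist u c) '' C)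

/-- The Reed-Solomon code with evaluation set `D` and dimension `k`. -/
noncomputable def RSCode {F : Type*} [Field F] (D : Finset F) (k : ℕ) : Set (D → F) :=
  {v | ∃ f : Polynomial F, f.degree < k ∧ ∀ α : D, v α = f.eval (α : F)}


open Polynomial Finset

set_option linter.unusedSectionVars false

section Helpers

variable {F : Type*} [Field F] [DecidableEq F]

def Form1 (D : Finset F) (k : ℕ) (u : F → F) : Prop :=
  ∃ a : F, a ≠ 0 ∧ ∃ h : Polynomial F, h.degree < (k : ℕ) ∧
    ∀ α ∈ D, u α = a * α ^ k + h.eval α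

def Form2 (D : Finset F) (k : ℕ) (u : F → F) : Prop :=
  ∃ δ : F, δ ∉ D ∧ ∃ a : F, a ≠ 0 ∧ ∃ h : Polynomial F, h.degree < (k : ℕ) ∧
    ∀ α ∈ D, u α = a * (α - δ)⁻¹ + h.eval α

def DeepOn (D : Finset F) (k : ℕ) (u : F → F) : Prop :=
  ∀ f : Polynomial F, f.degree < (k : ℕ) → (D.filter fun α => u α = f.eval α).card ≤ k

lemma degree_lt_of_coeffs {f : Polynomial F} {k : ℕ} (h : ∀ j, k ≤ j → f.coeff j = 0) :
    f.degree < (k : ℕ) := (degree_lt_iff_coeff_zero f k).2 h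

lemma coeffs_of_degree_lt {f : Polynomial F} {k : ℕ} (h : f.degree < (k : ℕ)) :
    ∀ j, k ≤ j → f.coeff j = 0 := (degree_lt_iff_coeff_zero f k).1 h

lemma coeff_linear_mul (t : F) (P : Polynomial F) {i : ℕ} (hi : 1 ≤ i) :
    ((X - C t) * P).coeff i = P.coeff (i - 1) - t * P.coeff i := by
  obtain ⟨m, rfl⟩ := Nat.exists_eq_add_of_le hi
  rw [sub_mul, coeff_sub, coeff_C_mul, add_comm 1 m]
  rw [coeff_X_mul]
  simp

lemma zero_on (s : Finset F) {P : Polynomial F} (hd : P.natDegree < s.card)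
    (hv : ∀ α ∈ s, P.eval α = 0) : P = 0 :=
  eq_zero_of_natDegree_lt_card_of_eval_eq_zero' P s hv hd

lemma agree_card_le (s : Finset F) {P : Polynomial F} (hP : P ≠ 0) :
    (s.filter fun α => P.eval α = 0).card ≤ P.natDegree := by
  calc (s.filter fun α => P.eval α = 0).card ≤ P.roots.toFinset.card := by
        apply Finset.card_le_card
        intro α hα
        rw [Finset.mem_filter] at hα
        rw [Multiset.mem_toFinset, mem_roots hP]
        exact hα.2
    _ ≤ Multiset.card P.roots := Multiset.toFinset_card_le _
    _ ≤ P.natDegree := card_roots' P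

/-- nodal polynomial -/
noncomputable def nod (D : Finset F) : Polynomial F := ∏ α ∈ D, (X - C α)

lemma nod_monic (D : Finset F) : (nod D).Monic :=
  monic_prod_of_monic _ _ fun α _ => monic_X_sub_C α

lemma nod_natDegree (D : Finset F) : (nod D).natDegree = D.card := by
  rw [nod, natDegree_prod]
  · simp [natDegree_X_sub_C]
  · intro α _; exact X_sub_C_ne_zero α

lemma nod_eval_eq_zero {D : Finset F} {α : F} (hα : α ∈ D) : (nod D).eval α = 0 := by
  rw [nod, eval_prod]
  exact Finset.prod_eq_zero hα (by simp)

lemma nod_eval_ne_zero {D : Finset F} {δ : F} (hδ : δ ∉ D) : (nod D).eval δ ≠ 0 := by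
  rw [nod, eval_prod]
  rw [Finset.prod_ne_zero_iff]
  intro α hα
  simp only [eval_sub, eval_X, eval_C, sub_ne_zero]
  rintro rfl; exact hδ hα

/-- interpolant of `1/(x-δ)` (times `-c₀`): quotient `(nod D - c₀)/(X-δ)`. -/
noncomputable def qpoly (D : Finset F) (δ : F) : Polynomial F :=
  (nod D - C ((nod D).eval δ)) /ₘ (X - C δ)

lemma qpoly_spec (D : Finset F) (δ : F) :
    (X - C δ) * qpoly D δ = nod D - C ((nod D).eval δ) := by
  rw [qpoly, mul_divByMonic_eq_iff_isRoot]
  simp [IsRoot]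

lemma qpoly_natDegree_le (D : Finset F) (δ : F) : (qpoly D δ).natDegree ≤ D.card - 1 := by
  rw [qpoly, natDegree_divByMonic _ (monic_X_sub_C δ), natDegree_X_sub_C]
  have : (nod D - C ((nod D).eval δ)).natDegree ≤ D.card := by
    apply le_trans (natDegree_sub_le _ _)
    simp [nod_natDegree, natDegree_C]
  omega

lemma qpoly_coeff_rec (D : Finset F) (δ : F) {i : ℕ} (hi : 1 ≤ i) :
    (qpoly D δ).coeff (i - 1) = (nod D).coeff i + δ * (qpoly D δ).coeff i := by
  have h := qpoly_spec D δ
  have := congrArg (fun P => Polynomial.coeff P i) h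
  rw [coeff_linear_mul δ _ hi] at this
  have hC : (C ((nod D).eval δ)).coeff i = 0 := by
    rw [coeff_C]; simp; omega
  rw [coeff_sub, hC, sub_zero] at this
  linear_combination this

lemma qpoly_coeff_top (D : Finset F) (hD : D.Nonempty) (δ : F) :
    (qpoly D δ).coeff (D.card - 1) = 1 := by
  have hcard : 1 ≤ D.card := Finset.card_pos.2 hD
  have h := qpoly_coeff_rec D δ (i := D.card) (by omega)
  have h1 : (nod D).coeff D.card = 1 := by
    have := (nod_monic D).coeff_natDegree
    rwa [nod_natDegree] at this
  have h2 : (qpoly D δ).coeff D.card = 0 := by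
    apply coeff_eq_zero_of_natDegree_lt
    have := qpoly_natDegree_le D δ
    omega
  rw [h1, h2] at h
  simpa using h

lemma qpoly_eval {D : Finset F} {δ : F} (hδ : δ ∉ D) {α : F} (hα : α ∈ D) :
    (qpoly D δ).eval α = -((nod D).eval δ) * (α - δ)⁻¹ := by
  have hne : α - δ ≠ 0 := sub_ne_zero.2 (by rintro rfl; exact hδ hα)
  have h := congrArg (fun P => Polynomial.eval α P) (qpoly_spec D δ)
  simp only [eval_mul, eval_sub, eval_X, eval_C, nod_eval_eq_zero hα, zero_sub] at h
  field_simp at h ⊢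
  linear_combination h

end Helpers

section Builders

variable {F : Type*} [Field F] [DecidableEq F]

lemma build_case1 (D : Finset F) (k : ℕ) (u : F → F) (w : Polynomial F)
    (hw : ∀ α ∈ D, w.eval α = u α) (ha : w.coeff k ≠ 0)
    (hdeg : ∀ j, k + 1 ≤ j → w.coeff j = 0) : Form1 D k u := by
  refine ⟨w.coeff k, ha, w - C (w.coeff k) * X ^ k, ?_, ?_⟩
  · apply degree_lt_of_coeffs
    intro j hj
    rcases eq_or_lt_of_le hj with rfl | hj'
    · simp [coeff_C_mul, coeff_X_pow]
    · simp only [coeff_sub, coeff_C_mul, coeff_X_pow]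
      rw [hdeg j (by omega), if_neg (by omega)]
      ring
  · intro α hα
    simp only [eval_sub, eval_mul, eval_C, eval_pow, eval_X]
    rw [hw α hα]; ring

lemma build_case2 (D : Finset F) (k : ℕ) (u : F → F) (w : Polynomial F)
    (hw : ∀ α ∈ D, w.eval α = u α) (δ : F) (hδ : δ ∉ D) (Cc : F) (hCc : Cc ≠ 0)
    (hcoeff : ∀ j, k ≤ j → w.coeff j = Cc * (qpoly D δ).coeff j) : Form2 D k u := by
  refine ⟨δ, hδ, -Cc * (nod D).eval δ, ?_, w - C Cc * qpoly D δ, ?_, ?_⟩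
  · exact mul_ne_zero (neg_ne_zero.2 hCc) (nod_eval_ne_zero hδ)
  · apply degree_lt_of_coeffs
    intro j hj
    simp only [coeff_sub, coeff_C_mul]
    rw [hcoeff j hj]; ring
  · intro α hα
    simp only [eval_sub, eval_mul, eval_C]
    rw [hw α hα, qpoly_eval hδ hα]
    ring

lemma coeff_k_ne (D : Finset F) (k : ℕ) (u : F → F) (hdeep : DeepOn D k u)
    (S : Finset F) (hS : S ⊆ D) (hcard : S.card = k + 1) (g : Polynomial F)
    (hgc : ∀ j, k + 1 ≤ j → g.coeff j = 0) (hg : ∀ α ∈ S, g.eval α = u α) :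
    g.coeff k ≠ 0 := by
  intro h0
  have hdlt : g.degree < (k : ℕ) := by
    apply degree_lt_of_coeffs
    intro j hj
    rcases eq_or_lt_of_le hj with rfl | hj'
    · exact h0
    · exact hgc j (by omega)
  have hle := hdeep g hdlt
  have hsub : S ⊆ D.filter fun α => u α = g.eval α := by
    intro α hα
    rw [Finset.mem_filter]
    exact ⟨hS hα, (hg α hα).symm⟩
  have := Finset.card_le_card hsub
  omega

lemma form1_deep (D : Finset F) (k : ℕ) (u : F → F) (h1 : Form1 D k u) : DeepOn D k u := by
  obtain ⟨a, ha, h, hh, hu⟩ := h1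
  intro f hf
  set P := C a * X ^ k + (h - f) with hP
  have hPk : P.coeff k = a := by
    simp only [hP, coeff_add, coeff_sub, coeff_C_mul, coeff_X_pow, if_pos rfl,
      coeffs_of_degree_lt hh k le_rfl, coeffs_of_degree_lt hf k le_rfl]
    simp
  have hPne : P ≠ 0 := fun h0 => ha (by rw [← hPk, h0, coeff_zero])
  have hPdeg : P.natDegree ≤ k := by
    have : P.degree < ((k + 1 : ℕ) : WithBot ℕ) := by
      apply degree_lt_of_coeffs
      intro j hj
      simp only [hP, coeff_add, coeff_sub, coeff_C_mul, coeff_X_pow, if_neg (by omega : ¬ j = k),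
        coeffs_of_degree_lt hh j (by omega), coeffs_of_degree_lt hf j (by omega)]
      ring
    have := (natDegree_lt_iff_degree_lt hPne).2 this
    omega
  calc (D.filter fun α => u α = f.eval α).card
      ≤ (D.filter fun α => P.eval α = 0).card := by
        apply Finset.card_le_card
        intro α hα
        rw [Finset.mem_filter] at hα ⊢
        refine ⟨hα.1, ?_⟩
        have := hu α hα.1
        simp only [hP, eval_add, eval_sub, eval_mul, eval_C, eval_pow, eval_X]
        rw [← hα.2, this]; ring
    _ ≤ P.natDegree := agree_card_le D hPne
    _ ≤ k := hPdeg

lemma form2_deep (D : Finset F) (k : ℕ) (u : F → F) (h2 : Form2 D k u) : DeepOn D k u := by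
  obtain ⟨δ, hδ, a, ha, h, hh, hu⟩ := h2
  intro f hf
  set P := C a + (X - C δ) * (h - f) with hP
  have hPδ : P.eval δ = a := by simp [hP]
  have hPne : P ≠ 0 := fun h0 => ha (by rw [← hPδ, h0, eval_zero])
  have hPdeg : P.natDegree ≤ k := by
    have : P.degree < ((k + 1 : ℕ) : WithBot ℕ) := by
      apply degree_lt_of_coeffs
      intro j hj
      have hhf : (h - f).degree < (k : ℕ) := lt_of_le_of_lt (degree_sub_le _ _) (max_lt hh hf)
      simp only [hP, coeff_add, coeff_C, if_neg (by omega : ¬ j = 0),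
        coeff_linear_mul δ _ (by omega : 1 ≤ j),
        coeffs_of_degree_lt hhf (j - 1) (by omega), coeffs_of_degree_lt hhf j (by omega)]
      ring
    have := (natDegree_lt_iff_degree_lt hPne).2 this
    omega
  calc (D.filter fun α => u α = f.eval α).card
      ≤ (D.filter fun α => P.eval α = 0).card := by
        apply Finset.card_le_card
        intro α hα
        rw [Finset.mem_filter] at hα ⊢
        refine ⟨hα.1, ?_⟩
        have hne : α - δ ≠ 0 := sub_ne_zero.2 (by rintro rfl; exact hδ hα.1)
        have h1 := hu α hα.1
        simp only [hP, eval_add, eval_sub, eval_mul, eval_C, eval_X]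
        rw [← hα.2, h1]
        field_simp
        ring
    _ ≤ P.natDegree := agree_card_le D hPne
    _ ≤ k := hPdeg

end Builders

section Comb

variable (p : ℕ) [Fact p.Prime]

lemma zmod_two_ne_zero (hp : 2 < p) : (2 : ZMod p) ≠ 0 := by
  have h2 : ((2 : ℕ) : ZMod p) = 0 ↔ p ∣ 2 := ZMod.natCast_eq_zero_iff 2 p
  intro h
  rw [show ((2 : ZMod p)) = ((2 : ℕ) : ZMod p) by norm_cast] at h
  have hd := h2.1 h
  have := Nat.le_of_dvd (by norm_num) hd
  omega

lemma inter_card_ge {A B : Finset (ZMod p)} (m : ℕ) (hm : m + p ≤ A.card + B.card) :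
    m ≤ (A ∩ B).card := by
  have h1 := Finset.card_inter_add_card_union A B
  have h2 : (A ∪ B).card ≤ p := by
    have := Finset.card_le_univ (A ∪ B)
    rwa [ZMod.card p] at this
  omega

lemma exists_add_pair (hp : 2 < p) (v : ZMod p) (D : Finset (ZMod p))
    (hcard : p + 2 ≤ 2 * D.card) :
    ∃ β ∈ D, ∃ γ ∈ D, β ≠ γ ∧ β + γ = v := by
  classical
  set B := D.image (fun x => v - x) with hB
  have hBcard : B.card = D.card := Finset.card_image_of_injective _ (fun x y h => by
    have : v - x = v - y := h
    linear_combination -this)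
  have hint : 2 ≤ (D ∩ B).card := by
    apply inter_card_ge p 2
    omega
  have hmem : ∀ x ∈ D ∩ B, x ∈ D ∧ v - x ∈ D := by
    intro x hx
    rw [Finset.mem_inter, hB, Finset.mem_image] at hx
    obtain ⟨hx1, a, ha, rfl⟩ := hx
    exact ⟨hx1, by simpa using ha⟩
  obtain ⟨x, y, hx, hy, hxy⟩ := Finset.one_lt_card_iff.1 hint
  by_cases h2x : x + x = v
  · refine ⟨y, (hmem y hy).1, v - y, (hmem y hy).2, ?_, by ring⟩
    intro h
    apply hxy
    have h2y : y + y = v := by linear_combination h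
    have h2 : (2 : ZMod p) * x = 2 * y := by linear_combination h2x - h2y
    exact mul_left_cancel₀ (zmod_two_ne_zero p hp) h2
  · refine ⟨x, (hmem x hx).1, v - x, (hmem x hx).2, ?_, by ring⟩
    intro h
    exact h2x (by linear_combination h)

lemma exists_mul_pair (hp : 2 < p) (c : ZMod p) (hc : c ≠ 0) (E : Finset (ZMod p))
    (hcard : p + 5 ≤ 2 * E.card) :
    ∃ x ∈ E, ∃ y ∈ E, x ≠ y ∧ x * y = c := by
  classical
  set E' := E.erase 0 with hE'
  have hE'card : E.card - 1 ≤ E'.card := by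
    by_cases h0 : (0 : ZMod p) ∈ E
    · rw [hE', Finset.card_erase_of_mem h0]
    · rw [hE', Finset.erase_eq_of_notMem h0]; omega
  have hE'0 : (0 : ZMod p) ∉ E' := Finset.notMem_erase _ _
  set B := E'.image (fun x => c * x⁻¹) with hB
  have hBcard : B.card = E'.card :=
    Finset.card_image_of_injective _ (fun x y h => inv_injective (mul_left_cancel₀ hc h))
  have hB0 : (0 : ZMod p) ∉ B := by
    rw [hB, Finset.mem_image]
    rintro ⟨a, ha, h⟩
    have ha0 : a ≠ 0 := fun h' => hE'0 (h' ▸ ha)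
    exact (mul_ne_zero hc (inv_ne_zero ha0)) h
  have hunion : (E' ∪ B).card ≤ p - 1 := by
    have hsub : E' ∪ B ⊆ Finset.univ.erase 0 := by
      intro x hx
      rw [Finset.mem_erase]
      rcases Finset.mem_union.1 hx with h | h
      · exact ⟨fun h' => hE'0 (h' ▸ h), Finset.mem_univ x⟩
      · exact ⟨fun h' => hB0 (h' ▸ h), Finset.mem_univ x⟩
    have := Finset.card_le_card hsub
    rwa [Finset.card_erase_of_mem (Finset.mem_univ _), Finset.card_univ, ZMod.card p] at this
  have hint : 4 ≤ (E' ∩ B).card := by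
    have h1 := Finset.card_inter_add_card_union E' B
    omega
  set bad := (X ^ 2 - C c : Polynomial (ZMod p)).roots.toFinset with hbad
  have hmonic : (X ^ 2 - C c : Polynomial (ZMod p)).Monic := monic_X_pow_sub_C c (by norm_num)
  have hbadcard : bad.card ≤ 2 := by
    calc bad.card ≤ Multiset.card (X ^ 2 - C c : Polynomial (ZMod p)).roots :=
          Multiset.toFinset_card_le _
      _ ≤ (X ^ 2 - C c : Polynomial (ZMod p)).natDegree := card_roots' _
      _ ≤ 2 := le_of_eq (natDegree_X_pow_sub_C)
  have hgood : 0 < ((E' ∩ B) \ bad).card := by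
    have := Finset.le_card_sdiff bad (E' ∩ B)
    omega
  obtain ⟨x, hx⟩ := Finset.card_pos.1 hgood
  rw [Finset.mem_sdiff, Finset.mem_inter] at hx
  obtain ⟨⟨hxE', hxB⟩, hxbad⟩ := hx
  have hx0 : x ≠ 0 := fun h' => hE'0 (h' ▸ hxE')
  have hxsq : x * x ≠ c := by
    intro h
    apply hxbad
    rw [hbad, Multiset.mem_toFinset, mem_roots hmonic.ne_zero]
    simp [IsRoot, pow_two, h]
  obtain ⟨a, haE', hax⟩ := Finset.mem_image.1 hxB
  have ha0 : a ≠ 0 := fun h' => hE'0 (h' ▸ haE')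
  have hy : c * x⁻¹ = a := by
    rw [← hax]
    field_simp
  refine ⟨x, Finset.erase_subset _ _ hxE', a, Finset.erase_subset _ _ haE', ?_, ?_⟩
  · intro h
    apply hxsq
    have hcx : c * x⁻¹ = x := by rw [hy, ← h]
    field_simp at hcx
    rw [← pow_two]; exact hcx.symm
  · rw [← hy]
    field_simp

end Comb

section Quad

variable (p : ℕ) [Fact p.Prime]

lemma odd_of_prime_gt_two (hp : 2 < p) : p % 2 = 1 := by
  rcases Nat.Prime.eq_two_or_odd (Fact.out : p.Prime) with h | h
  · omega
  · exact h

lemma quad_classify (hp : 2 < p) {k : ℕ} (hk : (p - 1) / 2 ≤ k)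
    (D : Finset (ZMod p)) (hD : D.card = k + 3) (a₀ a₁ a₂ : ZMod p)
    (H : ∀ β ∈ D, ∀ γ ∈ D, β ≠ γ → a₀ + a₁ * (β + γ) + a₂ * (β * γ) ≠ 0) :
    (a₂ = 0 ∧ a₁ = 0 ∧ a₀ ≠ 0) ∨
      (a₂ ≠ 0 ∧ ∃ δ : ZMod p, δ ∉ D ∧ a₁ = -(a₂ * δ) ∧ a₀ = a₂ * δ ^ 2) := by
  classical
  have hodd := odd_of_prime_gt_two p hp
  have hD2 : 1 < D.card := by omega
  by_cases h2 : a₂ = 0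
  · left
    have ha1 : a₁ = 0 := by
      by_contra h1
      obtain ⟨β, hβ, γ, hγ, hne, hsum⟩ :=
        exists_add_pair p hp (-(a₀ * a₁⁻¹)) D (by omega)
      apply H β hβ γ hγ hne
      rw [h2, hsum]
      field_simp
      ring
    refine ⟨h2, ha1, ?_⟩
    obtain ⟨β, γ, hβ, hγ, hne⟩ := Finset.one_lt_card_iff.1 hD2
    have := H β hβ γ hγ hne
    rw [h2, ha1] at this
    simpa using this
  · right
    refine ⟨h2, ?_⟩
    set r := a₁ * a₂⁻¹ with hr
    have key : ∀ β γ : ZMod p,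
        a₀ + a₁ * (β + γ) + a₂ * (β * γ) = a₂ * ((β + r) * (γ + r) + (a₀ * a₂⁻¹ - r ^ 2)) := by
      intro β γ
      rw [hr]
      field_simp
      ring
    set dd := a₀ * a₂⁻¹ - r ^ 2 with hdd'
    by_cases hdd : dd = 0
    · refine ⟨-r, ?_, ?_, ?_⟩
      · intro hmem
        obtain ⟨b, hb, hbne⟩ := Finset.exists_mem_ne hD2 (-r)
        apply H (-r) hmem b hb (fun h => hbne h.symm)
        rw [key]
        rw [show -r + r = (0 : ZMod p) by ring, hdd]
        ring
      · rw [hr]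
        have hinv : a₂ * a₂⁻¹ = 1 := mul_inv_cancel₀ h2
        linear_combination (-a₁) * hinv
      · have : a₀ * a₂⁻¹ = r ^ 2 := by
          have := hdd
          rw [hdd'] at this
          linear_combination this
        calc a₀ = a₀ * a₂⁻¹ * a₂ := by
              rw [mul_assoc, inv_mul_cancel₀ h2, mul_one]
          _ = r ^ 2 * a₂ := by rw [this]
          _ = a₂ * (-r) ^ 2 := by ring
    · exfalso
      obtain ⟨x, hx, y, hy, hxy, hmul⟩ :=
        exists_mul_pair p hp (-dd) (neg_ne_zero.2 hdd) (D.image (· + r))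
          (by rw [Finset.card_image_of_injective _ (add_left_injective r)]; omega)
      obtain ⟨β, hβ, hβx⟩ := Finset.mem_image.1 hx
      obtain ⟨γ, hγ, hγy⟩ := Finset.mem_image.1 hy
      have hne : β ≠ γ := by rintro rfl; rw [← hβx, ← hγy] at hxy; exact hxy rfl
      apply H β hβ γ hγ hne
      rw [key]
      rw [hβx, hγy, hmul]
      ring
end Quad

section Bases

variable {F : Type*} [Field F] [DecidableEq F]

lemma coeff_cxe_mul (c e : F) (P : Polynomial F) {i : ℕ} (hi : 1 ≤ i) :
    ((C c * X + C e) * P).coeff i = c * P.coeff (i - 1) + e * P.coeff i := by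
  obtain ⟨m, rfl⟩ := Nat.exists_eq_add_of_le hi
  rw [add_mul, coeff_add, mul_assoc, coeff_C_mul, coeff_C_mul, add_comm 1 m, coeff_X_mul]
  simp

lemma interp_facts (D : Finset F) (u : F → F) :
    ∃ w : Polynomial F, (∀ α ∈ D, w.eval α = u α) ∧ ∀ j, D.card ≤ j → w.coeff j = 0 := by
  refine ⟨Lagrange.interpolate D id u, fun α hα => ?_, fun j hj => ?_⟩
  · exact Lagrange.eval_interpolate_at_node u (Function.injective_id.injOn) hα
  · exact coeffs_of_degree_lt (Lagrange.degree_interpolate_lt u Function.injective_id.injOn) j hj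

lemma base_one (D : Finset F) (k : ℕ) (hD : D.card = k + 1) (u : F → F)
    (hdeep : DeepOn D k u) : Form1 D k u := by
  obtain ⟨w, hw, hwc⟩ := interp_facts D u
  have hgc : ∀ j, k + 1 ≤ j → w.coeff j = 0 := fun j hj => hwc j (by omega)
  have hk0 := coeff_k_ne D k u hdeep D (subset_refl D) hD w hgc (fun α hα => hw α hα)
  exact build_case1 D k u w hw hk0 hgc

lemma base_two (D : Finset F) (k : ℕ) (hD : D.card = k + 2) (u : F → F)
    (hdeep : DeepOn D k u) : Form1 D k u ∨ Form2 D k u := by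
  obtain ⟨w, hw, hwc⟩ := interp_facts D u
  set A := w.coeff k with hA
  set B := w.coeff (k + 1) with hB'
  set d₁ := (nod D).coeff (k + 1) with hd₁'
  have key : ∀ β ∈ D, A - B * (d₁ + β) ≠ 0 := by
    intro β hβ
    set S := D.erase β with hS
    have hScard : S.card = k + 1 := by
      rw [hS, Finset.card_erase_of_mem hβ, hD]
      omega
    have hπmonic := nod_monic S
    have hπdeg : (nod S).natDegree = k + 1 := by rw [nod_natDegree, hScard]
    have hπtop : (nod S).coeff (k + 1) = 1 := by rw [← hπdeg]; exact hπmonic.coeff_natDegree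
    have hπhigh : ∀ j, k + 2 ≤ j → (nod S).coeff j = 0 := fun j hj =>
      coeff_eq_zero_of_natDegree_lt (by omega)
    have hfact : nod D = (X - C β) * nod S := by
      rw [nod, hS, nod, ← Finset.mul_prod_erase D _ hβ]
    have hd₁ : (nod S).coeff k = d₁ + β := by
      have h1 := congrArg (fun P => Polynomial.coeff P (k + 1)) hfact
      rw [coeff_linear_mul β (nod S) (by omega : 1 ≤ k + 1)] at h1
      norm_num at h1
      rw [hπtop] at h1
      rw [hd₁']
      linear_combination -h1
    set g := w - C B * nod S with hg
    have hgc : ∀ j, k + 1 ≤ j → g.coeff j = 0 := by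
      intro j hj
      rcases eq_or_lt_of_le hj with rfl | h
      · rw [hg]; simp only [coeff_sub, coeff_C_mul]; rw [hπtop, ← hB']; ring
      · rw [hg]; simp only [coeff_sub, coeff_C_mul]
        rw [hwc j (by omega), hπhigh j (by omega)]; ring
    have hgeval : ∀ α ∈ S, g.eval α = u α := by
      intro α hα
      rw [hg]; simp only [eval_sub, eval_mul, eval_C]
      rw [nod_eval_eq_zero hα, hw α (Finset.erase_subset _ _ (hS ▸ hα))]
      ring
    have hne := coeff_k_ne D k u hdeep S (hS ▸ Finset.erase_subset _ _) hScard g hgc hgeval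
    intro h0
    apply hne
    rw [hg]
    simp only [coeff_sub, coeff_C_mul]
    rw [hd₁, ← hA]
    linear_combination h0
  by_cases hB : B = 0
  · left
    obtain ⟨β, hβ⟩ := Finset.card_pos.1 (by omega : 0 < D.card)
    have hAne : A ≠ 0 := by
      have := key β hβ
      rw [hB] at this
      simpa using this
    apply build_case1 D k u w hw hAne
    intro j hj
    rcases eq_or_lt_of_le hj with rfl | h
    · exact hB
    · exact hwc j (by omega)
  · right
    set δ := A * B⁻¹ - d₁ with hδ
    have hδD : δ ∉ D := by
      intro hmem
      apply key δ hmem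
      rw [hδ]
      field_simp
      ring
    apply build_case2 D k u w hw δ hδD B hB
    have hDne : D.Nonempty := Finset.card_pos.1 (by omega)
    have hqtop : (qpoly D δ).coeff (k + 1) = 1 := by
      have := qpoly_coeff_top D hDne δ
      rw [hD] at this
      norm_num at this
      exact this
    have hqk : (qpoly D δ).coeff k = d₁ + δ := by
      have h1 := qpoly_coeff_rec D δ (i := k + 1) (by omega)
      norm_num at h1
      rw [hqtop, ← hd₁'] at h1
      rw [h1]; ring
    have hqhigh : ∀ j, k + 2 ≤ j → (qpoly D δ).coeff j = 0 := fun j hj =>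
      coeff_eq_zero_of_natDegree_lt (lt_of_le_of_lt (qpoly_natDegree_le D δ) (by omega))
    intro j hj
    by_cases h1 : j = k
    · subst h1
      rw [hqk, hδ, ← hA]
      field_simp
      ring
    · by_cases h2 : j = k + 1
      · subst h2
        rw [hqtop, ← hB']
        ring
      · rw [hwc j (by omega), hqhigh j (by omega)]
        ring

end Bases

section BaseThree

variable (p : ℕ) [Fact p.Prime]

lemma base_three (hp : 2 < p) {k : ℕ} (hk : (p - 1) / 2 ≤ k) (hk1 : 1 ≤ k)
    (D : Finset (ZMod p)) (hD : D.card = k + 3) (u : ZMod p → ZMod p)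
    (hdeep : DeepOn D k u) : Form1 D k u ∨ Form2 D k u := by
  classical
  obtain ⟨w, hw, hwc⟩ := interp_facts D u
  set A := w.coeff k with hA
  set B := w.coeff (k + 1) with hB'
  set Cc := w.coeff (k + 2) with hCc'
  set d₁ := (nod D).coeff (k + 2) with hd₁'
  set d₂ := (nod D).coeff (k + 1) with hd₂'
  have key : ∀ β ∈ D, ∀ γ ∈ D, β ≠ γ →
      (A - B * d₁ + Cc * (d₁ ^ 2 - d₂)) + (Cc * d₁ - B) * (β + γ) + Cc * (β * γ) ≠ 0 := by
    intro β hβ γ hγ hne h0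
    have hγβ : γ ∈ D.erase β := Finset.mem_erase.2 ⟨hne.symm, hγ⟩
    set S := (D.erase β).erase γ with hS
    have hScard : S.card = k + 1 := by
      rw [hS, Finset.card_erase_of_mem hγβ, Finset.card_erase_of_mem hβ, hD]
      omega
    have hπmonic := nod_monic S
    have hπdeg : (nod S).natDegree = k + 1 := by rw [nod_natDegree, hScard]
    have hπtop : (nod S).coeff (k + 1) = 1 := by rw [← hπdeg]; exact hπmonic.coeff_natDegree
    have hπhigh : ∀ j, k + 2 ≤ j → (nod S).coeff j = 0 := fun j hj =>
      coeff_eq_zero_of_natDegree_lt (by omega)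
    set p₁ := (nod S).coeff k with hp₁'
    set p₂ := (nod S).coeff (k - 1) with hp₂'
    have hfact1 : nod (D.erase β) = (X - C γ) * nod S := by
      rw [nod, hS, nod, ← Finset.mul_prod_erase (D.erase β) _ hγβ]
    have hfact : nod D = (X - C β) * nod (D.erase β) := by
      rw [nod, nod, ← Finset.mul_prod_erase D _ hβ]
    -- coefficients of R := nod (D.erase β)
    have hR2 : (nod (D.erase β)).coeff (k + 2) = 1 := by
      have h1 := congrArg (fun P => Polynomial.coeff P (k + 2)) hfact1
      rw [coeff_linear_mul γ (nod S) (by omega : 1 ≤ k + 2)] at h1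
      norm_num at h1
      rw [h1, hπtop, hπhigh (k + 2) le_rfl]
      ring
    have hR1 : (nod (D.erase β)).coeff (k + 1) = p₁ - γ := by
      have h1 := congrArg (fun P => Polynomial.coeff P (k + 1)) hfact1
      rw [coeff_linear_mul γ (nod S) (by omega : 1 ≤ k + 1)] at h1
      norm_num at h1
      rw [h1, hπtop, ← hp₁']
      ring
    have hR0 : (nod (D.erase β)).coeff k = p₂ - γ * p₁ := by
      have h1 := congrArg (fun P => Polynomial.coeff P k) hfact1
      rw [coeff_linear_mul γ (nod S) (by omega : 1 ≤ k)] at h1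
      rw [h1, ← hp₁', ← hp₂']
    have hd₁ : p₁ = d₁ + β + γ := by
      have h1 := congrArg (fun P => Polynomial.coeff P (k + 2)) hfact
      rw [coeff_linear_mul β (nod (D.erase β)) (by omega : 1 ≤ k + 2)] at h1
      norm_num at h1
      rw [hR1, hR2, ← hd₁'] at h1
      linear_combination -h1
    have hd₂ : p₂ = d₂ + γ * p₁ + β * (p₁ - γ) := by
      have h1 := congrArg (fun P => Polynomial.coeff P (k + 1)) hfact
      rw [coeff_linear_mul β (nod (D.erase β)) (by omega : 1 ≤ k + 1)] at h1
      norm_num at h1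
      rw [hR0, hR1, ← hd₂'] at h1
      linear_combination -h1
    set E := B - Cc * p₁ with hE
    set g := w - (C Cc * X + C E) * nod S with hg
    have hgc : ∀ j, k + 1 ≤ j → g.coeff j = 0 := by
      intro j hj
      rw [hg, coeff_sub, coeff_cxe_mul Cc E (nod S) (by omega : 1 ≤ j)]
      by_cases h1 : j = k + 1
      · subst h1
        norm_num
        rw [hπtop, ← hp₁', ← hB', hE]
        ring
      · by_cases h2 : j = k + 2
        · subst h2
          norm_num
          rw [hπtop, hπhigh (k + 2) le_rfl, ← hCc']
          ring
        · rw [hwc j (by omega), hπhigh (j - 1) (by omega), hπhigh j (by omega)]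
          ring
    have hgeval : ∀ α ∈ S, g.eval α = u α := by
      intro α hα
      have hαD : α ∈ D := by
        rw [hS] at hα
        exact Finset.mem_of_mem_erase (Finset.mem_of_mem_erase hα)
      rw [hg]
      simp only [eval_sub, eval_mul, eval_add, eval_C, eval_X]
      rw [nod_eval_eq_zero hα, hw α hαD]
      ring
    have hSsub : S ⊆ D := fun α hα =>
      Finset.mem_of_mem_erase (Finset.mem_of_mem_erase (hS ▸ hα))
    have hne2 := coeff_k_ne D k u hdeep S hSsub hScard g hgc hgeval
    apply hne2
    rw [hg, coeff_sub, coeff_cxe_mul Cc E (nod S) (by omega : 1 ≤ k)]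
    rw [← hp₁', ← hp₂', ← hA, hE, hd₂, hd₁]
    linear_combination h0
  rcases quad_classify p hp hk D hD _ _ _ key with ⟨h2, h1, h0ne⟩ | ⟨hC, δ, hδD, h1, h0'⟩
  · left
    have hBz : B = 0 := by linear_combination d₁ * h2 - h1
    have hAne : A ≠ 0 := by
      intro h
      apply h0ne
      rw [h, hBz, h2]
      ring
    apply build_case1 D k u w hw hAne
    intro j hj
    by_cases ha : j = k + 1
    · subst ha; exact hBz
    · by_cases hb : j = k + 2
      · subst hb; exact h2
      · exact hwc j (by omega)
  · right
    apply build_case2 D k u w hw δ hδD Cc hC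
    have hDne : D.Nonempty := Finset.card_pos.1 (by omega)
    have hqtop : (qpoly D δ).coeff (k + 2) = 1 := by
      have := qpoly_coeff_top D hDne δ
      rw [hD] at this
      norm_num at this
      exact this
    have hqk1 : (qpoly D δ).coeff (k + 1) = d₁ + δ := by
      have h1 := qpoly_coeff_rec D δ (i := k + 2) (by omega)
      norm_num at h1
      rw [hqtop, ← hd₁'] at h1
      rw [h1]; ring
    have hqk : (qpoly D δ).coeff k = d₂ + δ * (d₁ + δ) := by
      have h1 := qpoly_coeff_rec D δ (i := k + 1) (by omega)
      norm_num at h1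
      rw [hqk1, ← hd₂'] at h1
      rw [h1]
    have hqhigh : ∀ j, k + 3 ≤ j → (qpoly D δ).coeff j = 0 := fun j hj =>
      coeff_eq_zero_of_natDegree_lt (lt_of_le_of_lt (qpoly_natDegree_le D δ) (by omega))
    intro j hj
    by_cases ha : j = k
    · subst ha
      rw [hqk, ← hA]
      linear_combination h0' - d₁ * h1
    · by_cases hb : j = k + 1
      · subst hb
        rw [hqk1, ← hB']
        linear_combination -h1
      · by_cases hc : j = k + 2
        · subst hc
          rw [hqtop, ← hCc']
          ring
        · rw [hwc j (by omega), hqhigh j (by omega)]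
          ring

end BaseThree

section Glue

variable {F : Type*} [Field F] [DecidableEq F]

lemma natDeg_le_pred {f : Polynomial F} {k : ℕ} (h : f.degree < (k : ℕ)) :
    f.natDegree ≤ k - 1 := by
  by_cases hf : f = 0
  · simp [hf]
  · have := (natDegree_lt_iff_degree_lt hf).2 h
    omega

lemma no_mixed (k : ℕ) (hk1 : 1 ≤ k) (s : Finset F) (hcard : k + 2 ≤ s.card) (u : F → F)
    (a : F) (ha : a ≠ 0) (h : Polynomial F) (hh : h.degree < (k : ℕ))
    (δ' a' : F) (hδ' : δ' ∉ s) (ha' : a' ≠ 0) (h' : Polynomial F) (hh' : h'.degree < (k : ℕ))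
    (h1 : ∀ α ∈ s, u α = a * α ^ k + h.eval α)
    (h2 : ∀ α ∈ s, u α = a' * (α - δ')⁻¹ + h'.eval α) : False := by
  set P := (X - C δ') * (C a * X ^ k + h - h') - C a' with hP
  have hPdeg : P.natDegree ≤ k + 1 := by
    apply le_trans (natDegree_sub_le _ _)
    simp only [natDegree_C, max_le_iff]
    constructor
    · apply le_trans (natDegree_mul_le)
      have h1' : (X - C δ').natDegree = 1 := natDegree_X_sub_C δ'
      have h2' : (C a * X ^ k + h - h').natDegree ≤ k := by
        apply le_trans (natDegree_sub_le _ _)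
        simp only [max_le_iff]
        refine ⟨le_trans (natDegree_add_le _ _) ?_, by have := natDeg_le_pred hh'; omega⟩
        simp only [max_le_iff]
        refine ⟨le_trans (natDegree_C_mul_le _ _) (by simp), by have := natDeg_le_pred hh; omega⟩
      omega
    · omega
  have hzero : ∀ α ∈ s, P.eval α = 0 := by
    intro α hα
    have hne : α - δ' ≠ 0 := sub_ne_zero.2 (by rintro rfl; exact hδ' hα)
    have hinv : (α - δ') * (α - δ')⁻¹ = 1 := mul_inv_cancel₀ hne
    have e1 := h1 α hα
    have e2 := h2 α hα
    rw [hP]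
    simp only [eval_sub, eval_mul, eval_add, eval_C, eval_X, eval_pow]
    linear_combination (δ' - α) * (e1 - e2) + a' * hinv
  have hP0 : P = 0 := zero_on s (by omega) hzero
  have := congrArg (fun f => Polynomial.eval δ' f) hP0
  simp only [hP, eval_sub, eval_mul, eval_add, eval_C, eval_X, eval_pow, sub_self,
    zero_mul, eval_zero] at this
  exact ha' (by linear_combination -this)

lemma glue_step (k : ℕ) (hk1 : 1 ≤ k) (D : Finset F) (hcard : k + 4 ≤ D.card) (u : F → F)
    (hrec : ∀ β ∈ D, Form1 (D.erase β) k u ∨ Form2 (D.erase β) k u) :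
    Form1 D k u ∨ Form2 D k u := by
  obtain ⟨β, γ, hβ, hγ, hne⟩ := Finset.one_lt_card_iff.1 (by omega : 1 < D.card)
  set s := (D.erase β).erase γ with hs
  have hγβ : γ ∈ D.erase β := Finset.mem_erase.2 ⟨fun h => hne h.symm, hγ⟩
  have hscard : k + 2 ≤ s.card := by
    rw [hs, Finset.card_erase_of_mem hγβ, Finset.card_erase_of_mem hβ]
    omega
  have hsubβ : s ⊆ D.erase β := hs ▸ Finset.erase_subset _ _
  have hsubγ : s ⊆ D.erase γ := by
    intro α hα
    rw [hs, Finset.mem_erase, Finset.mem_erase] at hα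
    exact Finset.mem_erase.2 ⟨hα.1, hα.2.2⟩
  have hcover : ∀ α ∈ D, α ∈ D.erase β ∨ α ∈ D.erase γ := by
    intro α hα
    by_cases hαβ : α = β
    · right; exact Finset.mem_erase.2 ⟨hαβ ▸ hne, hα⟩
    · left; exact Finset.mem_erase.2 ⟨hαβ, hα⟩
  rcases hrec β hβ with ⟨a, ha, h, hh, hu⟩ | ⟨δ, hδ, a, ha, h, hh, hu⟩ <;>
    rcases hrec γ hγ with ⟨a', ha', h', hh', hu'⟩ | ⟨δ', hδ', a', ha', h', hh', hu'⟩
  · -- form1 / form1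
    left
    have hP0 : C (a - a') * X ^ k + (h - h') = 0 := by
      apply zero_on s
      · have : (C (a - a') * X ^ k + (h - h')).natDegree ≤ k := by
          apply le_trans (natDegree_add_le _ _)
          simp only [max_le_iff]
          refine ⟨le_trans (natDegree_C_mul_le _ _) (by simp), by have := natDeg_le_pred (lt_of_le_of_lt (degree_sub_le h h') (max_lt hh hh')); omega⟩
        omega
      · intro α hα
        have e1 := hu α (hsubβ hα)
        have e2 := hu' α (hsubγ hα)
        simp only [eval_add, eval_sub, eval_mul, eval_C, eval_X, eval_pow]
        linear_combination e2 - e1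
    have haa : a = a' := by
      have hc := congrArg (fun f => Polynomial.coeff f k) hP0
      simp only [coeff_add, coeff_sub, coeff_C_mul, coeff_X_pow, if_pos rfl, if_true, coeff_zero,
        coeffs_of_degree_lt hh k le_rfl, coeffs_of_degree_lt hh' k le_rfl] at hc
      have h3 : a - a' = 0 := by linear_combination hc
      exact sub_eq_zero.1 h3
    have hhh : h = h' := by
      rw [haa, sub_self, map_zero, zero_mul, zero_add] at hP0
      exact sub_eq_zero.1 hP0
    refine ⟨a, ha, h, hh, fun α hα => ?_⟩
    rcases hcover α hα with hc | hc
    · exact hu α hc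
    · rw [haa, hhh]; exact hu' α hc
  · -- form1 / form2
    exact absurd (no_mixed k hk1 s hscard u a ha h hh δ' a'
      (fun hmem => hδ' (hsubγ hmem)) ha' h' hh'
      (fun α hα => hu α (hsubβ hα)) (fun α hα => hu' α (hsubγ hα))) (fun f => f)
  · -- form2 / form1
    exact absurd (no_mixed k hk1 s hscard u a' ha' h' hh' δ a
      (fun hmem => hδ (hsubβ hmem)) ha h hh
      (fun α hα => hu' α (hsubγ hα)) (fun α hα => hu α (hsubβ hα))) (fun f => f)
  · -- form2 / form2
    by_cases hδδ : δ = δ'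
    · subst hδδ
      right
      have hδs : ∀ α ∈ s, α - δ ≠ 0 := fun α hα =>
        sub_ne_zero.2 (by rintro rfl; exact hδ (hsubβ hα))
      have hP0 : C (a - a') - (X - C δ) * (h' - h) = 0 := by
        apply zero_on s
        · have : (C (a - a') - (X - C δ) * (h' - h)).natDegree ≤ k := by
            apply le_trans (natDegree_sub_le _ _)
            simp only [natDegree_C, max_le_iff]
            refine ⟨by omega, le_trans natDegree_mul_le ?_⟩
            have := natDeg_le_pred (lt_of_le_of_lt (degree_sub_le h' h) (max_lt hh' hh))
            rw [natDegree_X_sub_C]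
            omega
          omega
        · intro α hα
          have hne' := hδs α hα
          have hinv : (α - δ) * (α - δ)⁻¹ = 1 := mul_inv_cancel₀ hne'
          have e1 := hu α (hsubβ hα)
          have e2 := hu' α (hsubγ hα)
          simp only [eval_sub, eval_mul, eval_C, eval_X]
          linear_combination (-(α - δ)) * (e1 - e2) - (a - a') * hinv
      have haa : a = a' := by
        have := congrArg (fun f => Polynomial.eval δ f) hP0
        simp only [eval_sub, eval_mul, eval_C, eval_X, sub_self, zero_mul, eval_zero] at this
        have h3 : a - a' = 0 := by linear_combination this
        exact sub_eq_zero.1 h3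
      have hhh : h' = h := by
        rw [haa, sub_self, map_zero, zero_sub, neg_eq_zero] at hP0
        rcases mul_eq_zero.1 hP0 with hx | hx
        · exact absurd hx (X_sub_C_ne_zero δ)
        · exact sub_eq_zero.1 hx
      have hδD : δ ∉ D := by
        intro hmem
        rcases hcover δ hmem with hc | hc
        · exact hδ hc
        · exact hδ' hc
      refine ⟨δ, hδD, a, ha, h, hh, fun α hα => ?_⟩
      rcases hcover α hα with hc | hc
      · exact hu α hc
      · rw [haa, ← hhh]; exact hu' α hc
    · exfalso
      have hP0 : C a * (X - C δ') - C a' * (X - C δ) - (X - C δ) * (X - C δ') * (h' - h) = 0 := by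
        apply zero_on s
        · have hd : ((X - C δ) * (X - C δ') * (h' - h)).natDegree ≤ k + 1 := by
            apply le_trans natDegree_mul_le
            have h1' := natDeg_le_pred (lt_of_le_of_lt (degree_sub_le h' h) (max_lt hh' hh))
            have h2' : ((X - C δ) * (X - C δ')).natDegree ≤ 2 := by
              apply le_trans natDegree_mul_le
              rw [natDegree_X_sub_C, natDegree_X_sub_C]
            omega
          have : (C a * (X - C δ') - C a' * (X - C δ) - (X - C δ) * (X - C δ') * (h' - h)).natDegree ≤ k + 1 := by
            apply le_trans (natDegree_sub_le _ _)
            simp only [max_le_iff]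
            refine ⟨le_trans (natDegree_sub_le _ _) ?_, hd⟩
            simp only [max_le_iff]
            constructor <;> refine le_trans (natDegree_C_mul_le _ _) (by rw [natDegree_X_sub_C]; omega)
          omega
        · intro α hα
          have hne1 : α - δ ≠ 0 := sub_ne_zero.2 (by rintro rfl; exact hδ (hsubβ hα))
          have hne2 : α - δ' ≠ 0 := sub_ne_zero.2 (by rintro rfl; exact hδ' (hsubγ hα))
          have hinv1 : (α - δ) * (α - δ)⁻¹ = 1 := mul_inv_cancel₀ hne1
          have hinv2 : (α - δ') * (α - δ')⁻¹ = 1 := mul_inv_cancel₀ hne2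
          have e1 := hu α (hsubβ hα)
          have e2 := hu' α (hsubγ hα)
          simp only [eval_sub, eval_mul, eval_C, eval_X]
          linear_combination (-(α - δ) * (α - δ')) * (e1 - e2) - (a * (α - δ')) * hinv1 +
            (a' * (α - δ)) * hinv2
      have := congrArg (fun f => Polynomial.eval δ f) hP0
      simp only [eval_sub, eval_mul, eval_C, eval_X, sub_self, zero_mul, mul_zero, eval_zero] at this
      have : a * (δ - δ') = 0 := by linear_combination this
      rcases mul_eq_zero.1 this with hx | hx
      · exact ha hx
      · exact hδδ (by linear_combination hx)

end Glue

section Classify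

theorem classify (p : ℕ) [Fact p.Prime] (hp : 2 < p) {k : ℕ} (hk : (p - 1) / 2 ≤ k) :
    ∀ N (D : Finset (ZMod p)), D.card ≤ N → k < D.card → ∀ u : ZMod p → ZMod p,
      DeepOn D k u → Form1 D k u ∨ Form2 D k u := by
  have hk1 : 1 ≤ k := by
    have := odd_of_prime_gt_two p hp
    omega
  intro N
  induction N with
  | zero => intro D h1 h2 u _; omega
  | succ N ih =>
    intro D hDN hkD u hdeep
    by_cases hb1 : D.card = k + 1
    · exact Or.inl (base_one D k hb1 u hdeep)
    by_cases hb2 : D.card = k + 2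
    · exact base_two D k hb2 u hdeep
    by_cases hb3 : D.card = k + 3
    · exact base_three p hp hk hk1 D hb3 u hdeep
    apply glue_step k hk1 D (by omega) u
    intro β hβ
    apply ih (D.erase β) ?_ ?_ u ?_
    · rw [Finset.card_erase_of_mem hβ]; omega
    · rw [Finset.card_erase_of_mem hβ]; omega
    · intro f hf
      exact le_trans (Finset.card_le_card
        (Finset.filter_subset_filter _ (Finset.erase_subset _ _))) (hdeep f hf)

end Classify

section Boundary

variable {F : Type*} [Field F] [DecidableEq F]

lemma dist_filter (D : Finset F) (x y : ↥D → F) :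
    hammingDist x y = (Finset.univ.filter fun i : ↥D => ¬ (x i = y i)).card := rfl

lemma dist_card (D : Finset F) (x y : ↥D → F) :
    hammingDist x y + (Finset.univ.filter fun α : ↥D => x α = y α).card = D.card := by
  have h := Finset.card_filter_add_card_filter_not
    (s := (Finset.univ : Finset ↥D)) (p := fun α => x α = y α)
  rw [Finset.card_univ, Fintype.card_coe] at h
  rw [dist_filter]
  omega

lemma filter_coe (D : Finset F) (P : F → Prop) [DecidablePred P] :
    (Finset.univ.filter fun α : ↥D => P ↑α).card = (D.filter P).card := by
  apply Finset.card_bij (fun (a : ↥D) _ => (a : F))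
  · intro a ha
    rw [Finset.mem_filter] at ha ⊢
    exact ⟨a.2, ha.2⟩
  · intro a _ b _ hab
    exact Subtype.ext hab
  · intro b hb
    rw [Finset.mem_filter] at hb
    exact ⟨⟨b, hb.1⟩, by rw [Finset.mem_filter]; exact ⟨Finset.mem_univ _, hb.2⟩, rfl⟩

lemma errDist_eq_iff (D : Finset F) (k : ℕ) (hkD : k < D.card) (u : ↥D → F) :
    errDist u (RSCode D k) = D.card - k ↔
      DeepOn D k (fun x => if hx : x ∈ D then u ⟨x, hx⟩ else 0) := by
  set u' : F → F := fun x => if hx : x ∈ D then u ⟨x, hx⟩ else 0 with hu'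
  have hu'eq : ∀ α : ↥D, u' ↑α = u α := fun α => dif_pos α.2
  -- agreement count for codewords
  have agree_eq : ∀ f : Polynomial F,
      (Finset.univ.filter fun α : ↥D => u α = f.eval ↑α).card =
        (D.filter fun α => u' α = f.eval α).card := by
    intro f
    rw [← filter_coe D (fun α => u' α = f.eval α)]
    congr 1
    apply Finset.filter_congr
    intro α _
    rw [hu'eq α]
  -- upper bound codeword
  obtain ⟨T, hTsub, hTcard⟩ := Finset.exists_subset_card_eq (le_of_lt hkD)
  set f₀ := Lagrange.interpolate T id u' with hf₀
  have hf₀deg : f₀.degree < (k : ℕ) := by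
    have := Lagrange.degree_interpolate_lt (s := T) u' Function.injective_id.injOn
    rwa [hTcard] at this
  set c₀ : ↥D → F := fun α => f₀.eval ↑α with hc₀'
  have hc₀ : c₀ ∈ RSCode D k := ⟨f₀, hf₀deg, fun α => rfl⟩
  have hd₀ : hammingDist u c₀ ≤ D.card - k := by
    rw [dist_filter]
    have hsub : (Finset.univ.filter fun i : ↥D => ¬ (u i = c₀ i)) ⊆
        (Finset.univ.filter fun i : ↥D => (↑i : F) ∉ T) := by
      intro α hα
      rw [Finset.mem_filter] at hα ⊢
      refine ⟨Finset.mem_univ _, fun hT => ?_⟩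
      apply hα.2
      have hev := Lagrange.eval_interpolate_at_node u' (Function.injective_id.injOn) hT
      calc u α = u' ↑α := (hu'eq α).symm
        _ = f₀.eval ↑α := by rw [← hev]; rfl
        _ = c₀ α := rfl
    have hcard2 : (Finset.univ.filter fun i : ↥D => (↑i : F) ∉ T).card = D.card - k := by
      rw [filter_coe D (fun x => x ∉ T), ← Finset.sdiff_eq_filter,
        Finset.card_sdiff_of_subset hTsub, hTcard]
    calc (Finset.univ.filter fun i : ↥D => ¬ (u i = c₀ i)).card
        ≤ _ := Finset.card_le_card hsub
      _ = D.card - k := hcard2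
  constructor
  · intro hE
    intro f hf
    by_contra hgt
    push_neg at hgt
    have hcmem : (fun α : ↥D => f.eval ↑α) ∈ RSCode D k := ⟨f, hf, fun α => rfl⟩
    have hagree : k + 1 ≤ (Finset.univ.filter fun α : ↥D => u α = f.eval ↑α).card := by
      rw [agree_eq f]
      omega
    have hdc : hammingDist u (fun α : ↥D => f.eval ↑α) +
        (Finset.univ.filter fun α : ↥D => u α = f.eval ↑α).card = D.card :=
      dist_card D u _
    have hsinf : errDist u (RSCode D k) ≤ hammingDist u (fun α : ↥D => f.eval ↑α) :=
      Nat.sInf_le ⟨_, hcmem, rfl⟩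
    rw [hE] at hsinf
    have hsinf' : D.card - k ≤ hammingDist u (fun α : ↥D => f.eval ↑α) := hsinf
    omega
  · intro hdeep
    have hlb : ∀ x ∈ ((fun c => hammingDist u c) '' RSCode D k), D.card - k ≤ x := by
      rintro x ⟨c, hc, rfl⟩
      obtain ⟨f, hf, hcf⟩ := hc
      show D.card - k ≤ hammingDist u c
      have h1 : (Finset.univ.filter fun α : ↥D => u α = c α).card ≤ k := by
        have he : (Finset.univ.filter fun α : ↥D => u α = c α) =
            (Finset.univ.filter fun α : ↥D => u α = f.eval ↑α) := by
          apply Finset.filter_congr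
          intro α _
          rw [hcf α]
        rw [he, agree_eq f]
        exact hdeep f hf
      have hdc := dist_card D u c
      omega
    have hmem : hammingDist u c₀ ∈ ((fun c => hammingDist u c) '' RSCode D k) :=
      ⟨c₀, hc₀, rfl⟩
    apply le_antisymm
    · have := Nat.sInf_le hmem
      have := hlb _ hmem
      have : hammingDist u c₀ = D.card - k := le_antisymm hd₀ (hlb _ hmem)
      rw [← this]
      exact Nat.sInf_le hmem
    · have hne : ((fun c => hammingDist u c) '' RSCode D k).Nonempty := ⟨_, hmem⟩
      exact hlb _ (Nat.sInf_mem hne)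

end Boundary

/-- Main theorem: for `p` prime, `k ≥ (p-1)/2`, `k < |D| ≤ p`, the deep holes of
`RS_p(D,k)` are exactly the words generated by functions equivalent to `x^k` or to
`1/(x-δ)` with `δ ∉ D`. -/
theorem stmt13 (p : ℕ) [Fact p.Prime] (hp : 2 < p) (k : ℕ)
    (hk : (p - 1) / 2 ≤ k)
    (D : Finset (ZMod p)) (hkD : k < D.card) (u : D → ZMod p) :
    errDist u (RSCode D k) = D.card - k ↔
      ((∃ a : ZMod p, a ≠ 0 ∧ ∃ h : Polynomial (ZMod p), h.degree < k ∧
          ∀ α : D, u α = a * (α : ZMod p) ^ k + h.eval (α : ZMod p)) ∨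
        (∃ δ : ZMod p, δ ∉ D ∧ ∃ a : ZMod p, a ≠ 0 ∧
          ∃ h : Polynomial (ZMod p), h.degree < k ∧
            ∀ α : D, u α = a * ((α : ZMod p) - δ)⁻¹ + h.eval (α : ZMod p))) := by
  rw [errDist_eq_iff D k hkD u]
  constructor
  · intro hdeep
    rcases classify p hp hk D.card D le_rfl hkD _ hdeep with
      ⟨a, ha, h, hh, hf⟩ | ⟨δ, hδ, a, ha, h, hh, hf⟩
    · left
      refine ⟨a, ha, h, hh, fun α => ?_⟩
      have h1 := hf ↑α α.2
      simp only [dif_pos α.2] at h1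
      exact h1
    · right
      refine ⟨δ, hδ, a, ha, h, hh, fun α => ?_⟩
      have h1 := hf ↑α α.2
      simp only [dif_pos α.2] at h1
      exact h1
  · intro hR
    rcases hR with ⟨a, ha, h, hh, hf⟩ | ⟨δ, hδ, a, ha, h, hh, hf⟩
    · exact form1_deep D k _ ⟨a, ha, h, hh, fun α hα => by
        simp only [dif_pos hα]; exact hf ⟨α, hα⟩⟩
    · exact form2_deep D k _ ⟨δ, hδ, a, ha, h, hh, fun α hα => by
        simp only [dif_pos hα]; exact hf ⟨α, hα⟩⟩
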